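/- Let ⟨U, Γ⟩ be a parallelism structure with covariant derivative ∇ and λ an invertible smooth (1,1)-extensor operator field on U. Define the λ-deformed connection by Γ^λ(a,v) = λ(Γ(a, λ^{-1}(v))). Then Γ^λ is again a connection (satisfying strong linearity in the first argument and the Leibniz quasi-linearity in the second), and its covariant derivative satisfies ∇^λ_a v = λ(∇_a λ^{-1}(v)) on vector fields and ∇^λ_a ω = λ^{-△}(∇_a λ^△(ω)) on 1-form fields, where λ^△ is the pointwise transpose of λ. -/
import Mathlib


/-- The `λ`-deformation of a parallelism structure.  The commutative ring `A` models
the smooth scalar fields on `U`, the `A`-module `V` models the smooth vector fields,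
`act a f` models the directional derivative `af` of a scalar field `f` along `a`, and
`Γ : V → V → V` is a connection: strongly linear in its first argument and
quasi-linear (Leibniz) in its second.  For an invertible `(1,1)`-extensor operator
field `λ` (an `A`-linear automorphism of `V`), the deformed connection
`Γ^λ(a,v) = λ(Γ(a, λ⁻¹ v))` is again a connection, its covariant derivative satisfies
`∇^λ_a v = λ(∇_a λ⁻¹(v))` on vector fields, and on `1`-form fields
`∇^λ_a ω = λ^{-△}(∇_a λ^△(ω))`, i.e. pointwise
`(∇^λ_a ω)(v) = (∇_a(ω ∘ λ))(λ⁻¹ v)`, where `(∇_a ω)(v) = a(ω(v)) − ω(∇_a v)` and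
`λ^△` is the pointwise transpose. -/
theorem deformed_connection
    (A : Type*) [CommRing A] (V : Type*) [AddCommGroup V] [Module A V]
    (act : V → A → A)
    (Γ : V → V → V)
    (hΓ1 : ∀ (f g : A) (a b v : V),
      Γ (f • a + g • b) v = f • Γ a v + g • Γ b v)
    (hΓ2 : ∀ (f g : A) (a v w : V),
      Γ a (f • v + g • w) = act a f • v + act a g • w + f • Γ a v + g • Γ a w)
    (lam : V ≃ₗ[A] V) :
    let Γl : V → V → V := fun a v => lam (Γ a (lam.symm v))
    -- `Γ^λ` is strongly linear in the first variable
    (∀ (f g : A) (a b v : V),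
      Γl (f • a + g • b) v = f • Γl a v + g • Γl b v) ∧
    -- `Γ^λ` is quasi-linear (Leibniz) in the second variable
    (∀ (f g : A) (a v w : V),
      Γl a (f • v + g • w) = act a f • v + act a g • w + f • Γl a v + g • Γl a w) ∧
    -- `∇^λ_a v = λ(∇_a λ⁻¹(v))` on vector fields
    (∀ a v, Γl a v = lam (Γ a (lam.symm v))) ∧
    -- `∇^λ_a ω = λ^{-△}(∇_a λ^△(ω))` on `1`-form fields, pointwise
    (∀ (a : V) (ω : Module.Dual A V) (v : V),
      act a (ω v) - ω (Γl a v) =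
        act a ((lam.toLinearMap.dualMap ω) (lam.symm v)) -
          (lam.toLinearMap.dualMap ω) (Γ a (lam.symm v))) := by
  intro Γl
  refine ⟨?_, ?_, ?_, ?_⟩
  · intro f g a b v
    simp only [Γl, hΓ1, map_add, map_smul]
  · intro f g a v w
    simp only [Γl, map_add, map_smul, hΓ2]
    simp [lam.apply_symm_apply]
  · intro a v; rfl
  · intro a ω v
    simp [Γl, LinearMap.dualMap_apply]
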